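/- There is an absolute constant C such that for all μ>0 and all integers n≥1, 0 ≤ (1+μ)^{-n} − e^{-nμ} ≤ C n^{-1} min((μn)², (μn)^{-1}). -/

import Mathlib

lemma aux_pow_sub (a b : ℝ) (hb : 0 ≤ b) (hba : b ≤ a) (ha : a ≤ 1) (n : ℕ) :
    a ^ n - b ^ n ≤ n * (a - b) := by
  induction n with
  | zero => simp
  | succ n ih =>
    have hbn : b ^ n ≤ a ^ n := pow_le_pow_left₀ hb hba n
    have han : a ^ n ≤ 1 := pow_le_one₀ (hb.trans hba) ha
    have hbn0 : 0 ≤ b ^ n := pow_nonneg hb n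
    have e1 : a ^ (n+1) = a * a ^ n := by ring
    have e2 : b ^ (n+1) = b * b ^ n := by ring
    push_cast
    nlinarith [ih]

lemma aux_nat (m : ℕ) : (m + 1)^2 ≤ 9 * 2 ^ m := by
  induction m with
  | zero => norm_num
  | succ m ih =>
    have h2 : m < 2 ^ m := m.lt_two_pow_self
    have h3 : 2 ^ (m+1) = 2 * 2 ^ m := by rw [pow_succ]; ring
    nlinarith [ih, h2, h3]

set_option maxHeartbeats 1000000 in
theorem stmt19 :
    ∃ C : ℝ, 0 < C ∧ ∀ μ : ℝ, 0 < μ → ∀ n : ℕ, 1 ≤ n →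
      0 ≤ ((1 + μ) ^ n)⁻¹ - Real.exp (-((n : ℝ) * μ)) ∧
      ((1 + μ) ^ n)⁻¹ - Real.exp (-((n : ℝ) * μ))
        ≤ C * (n : ℝ)⁻¹ * min ((μ * (n : ℝ)) ^ 2) ((μ * (n : ℝ))⁻¹) := by
  refine ⟨216, by norm_num, ?_⟩
  intro μ hμ n hn
  have hn0 : (0:ℝ) < n := by exact_mod_cast Nat.lt_of_lt_of_le Nat.zero_lt_one hn
  have h1μ : (0:ℝ) < 1 + μ := by linarith
  have hb0 : (0:ℝ) < Real.exp (-μ) := Real.exp_pos _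
  -- exp(-μ) ≤ (1+μ)⁻¹
  have hb : Real.exp (-μ) ≤ (1+μ)⁻¹ := by
    rw [Real.exp_neg]
    exact inv_anti₀ (by positivity) (by linarith [Real.add_one_le_exp μ])
  -- rewrite forms
  have hbn : Real.exp (-((n:ℝ) * μ)) = Real.exp (-μ) ^ n := by
    rw [← Real.exp_nat_mul]; ring_nf
  have hinvpow : ((1+μ)^n)⁻¹ = ((1+μ)⁻¹)^n := by rw [inv_pow]
  have hainv0 : (0:ℝ) < (1+μ)⁻¹ := inv_pos.mpr h1μ
  have hainv1 : (1+μ)⁻¹ ≤ 1 := by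
    rw [inv_le_one_iff₀]; right; linarith
  -- lower bound
  have hlow : Real.exp (-((n:ℝ)*μ)) ≤ ((1+μ)^n)⁻¹ := by
    rw [hbn, hinvpow]
    exact pow_le_pow_left₀ hb0.le hb n
  refine ⟨by linarith, ?_⟩
  set x : ℝ := μ * n with hxdef
  clear_value x
  have hx0 : 0 < x := hxdef ▸ mul_pos hμ hn0
  rcases le_or_gt x 1 with hx1 | hx1
  · -- case x ≤ 1 : min = x^2, use aⁿ - bⁿ ≤ n μ²
    have hmin : min (x^2) x⁻¹ = x^2 := by
      apply min_eq_left
      rw [← one_div, le_div_iff₀ hx0]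
      nlinarith
    have hab : (1+μ)⁻¹ - Real.exp (-μ) ≤ μ^2 := by
      have h1 : 1 - μ ≤ Real.exp (-μ) := by linarith [Real.add_one_le_exp (-μ)]
      have h2 : (1+μ)⁻¹ ≤ 1 - μ + μ^2 := by
        rw [inv_le_iff_one_le_mul₀ h1μ]
        nlinarith
      linarith
    have key := aux_pow_sub ((1+μ)⁻¹) (Real.exp (-μ)) hb0.le hb hainv1 n
    have hD : ((1+μ)^n)⁻¹ - Real.exp (-((n:ℝ)*μ)) ≤ n * μ^2 := by
      rw [hbn, hinvpow]
      calc ((1+μ)⁻¹)^n - Real.exp (-μ) ^ n ≤ n * ((1+μ)⁻¹ - Real.exp (-μ)) := key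
        _ ≤ n * μ^2 := by nlinarith
    rw [hmin]
    have heq : 216 * (n:ℝ)⁻¹ * x^2 = 216 * ((n:ℝ) * μ^2) := by
      field_simp [hxdef]; rw [hxdef]; ring
    rw [heq]
    nlinarith [mul_pos hn0 (mul_pos hμ hμ)]
  · -- x > 1
    have hmin : min (x^2) x⁻¹ = x⁻¹ := by
      apply min_eq_right
      have h1 : x⁻¹ ≤ 1 := by
        rw [inv_le_one_iff₀]; right; linarith
      nlinarith
    rw [hmin]
    have hrhs : 216 * (n:ℝ)⁻¹ * x⁻¹ = 216 / ((n:ℝ)^2 * μ) := by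
      field_simp [hxdef]; rw [hxdef]; ring
    rw [hrhs]
    rcases le_or_gt μ 1 with hμ1 | hμ1
    · -- case ii : μ ≤ 1 < x
      set la : ℝ := Real.log (1+μ) with hladef
      clear_value la
      have hexpla : Real.exp la = 1 + μ := by rw [hladef]; exact Real.exp_log h1μ
      have hinv2 : ((1+μ)^n)⁻¹ = Real.exp (-((n:ℝ)*la)) := by
        rw [← hexpla, ← Real.exp_nat_mul, ← Real.exp_neg]
      have hla_le : la ≤ μ := by
        rw [hladef]; linarith [Real.log_le_sub_one_of_pos h1μ]
      have hla_ge : μ / (1+μ) ≤ la := by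
        rw [hladef]
        have h := Real.log_le_sub_one_of_pos hainv0
        rw [Real.log_inv] at h
        have e : (1+μ)⁻¹ - 1 = -(μ/(1+μ)) := by field_simp; ring
        rw [e] at h
        linarith
      have hla_ge2 : μ/2 ≤ la := by
        have h12 : (1:ℝ)+μ ≤ 2 := by linarith
        have : μ/2 ≤ μ/(1+μ) := div_le_div_of_nonneg_left hμ.le h1μ h12
        linarith
      have h2n : Real.exp (-((n:ℝ)*la)) ≤ Real.exp (-((n:ℝ)*(μ/2))) := by
        apply Real.exp_le_exp.mpr
        have : (n:ℝ)*(μ/2) ≤ (n:ℝ)*la := mul_le_mul_of_nonneg_left hla_ge2 hn0.le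
        linarith
      have hdiff : μ - la ≤ μ^2 := by
        have e : μ - μ/(1+μ) = μ^2/(1+μ) := by field_simp; ring
        have h3 : μ^2/(1+μ) ≤ μ^2 := div_le_self (by positivity) (by linarith)
        linarith
      have hstep1 : ((1+μ)^n)⁻¹ - Real.exp (-((n:ℝ)*μ))
          ≤ Real.exp (-((n:ℝ)*(μ/2))) * ((n:ℝ) * μ^2) := by
        rw [hinv2]
        have hsplit : Real.exp (-((n:ℝ)*μ))
            = Real.exp (-((n:ℝ)*la)) * Real.exp (-((n:ℝ)*(μ - la))) := by
          rw [← Real.exp_add]; ring_nf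
        have h1e : 1 - Real.exp (-((n:ℝ)*(μ - la))) ≤ (n:ℝ)*(μ - la) := by
          linarith [Real.add_one_le_exp (-((n:ℝ)*(μ - la)))]
        have hEpos : (0:ℝ) < Real.exp (-((n:ℝ)*la)) := Real.exp_pos _
        have hnd0 : 0 ≤ (n:ℝ)*(μ - la) := by
          apply mul_nonneg hn0.le; linarith
        calc Real.exp (-((n:ℝ)*la)) - Real.exp (-((n:ℝ)*μ))
            = Real.exp (-((n:ℝ)*la)) * (1 - Real.exp (-((n:ℝ)*(μ - la)))) := by
              rw [hsplit]; ring
          _ ≤ Real.exp (-((n:ℝ)*la)) * ((n:ℝ)*(μ - la)) :=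
              mul_le_mul_of_nonneg_left h1e hEpos.le
          _ ≤ Real.exp (-((n:ℝ)*(μ/2))) * ((n:ℝ) * μ^2) := by
              apply mul_le_mul h2n ?_ hnd0 (Real.exp_pos _).le
              exact mul_le_mul_of_nonneg_left hdiff hn0.le
      have hcube : x^3 / 216 ≤ Real.exp ((n:ℝ)*(μ/2)) := by
        have hc : (x/6)^3 ≤ (Real.exp (x/6))^3 :=
          pow_le_pow_left₀ (by positivity) (by linarith [Real.add_one_le_exp (x/6)]) 3
        have he : (Real.exp (x/6))^3 = Real.exp ((n:ℝ)*(μ/2)) := by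
          rw [← Real.exp_nat_mul]
          congr 1
          push_cast
          rw [hxdef]; ring
        have he2 : (x/6)^3 = x^3/216 := by ring
        rw [he2, he] at hc
        exact hc
      have hexpinv : Real.exp (-((n:ℝ)*(μ/2))) ≤ 216 / x^3 := by
        rw [Real.exp_neg, inv_eq_one_div, div_le_div_iff₀ (Real.exp_pos _) (by positivity)]
        nlinarith [hcube]
      have hfinal : (216 / x^3) * ((n:ℝ) * μ^2) = 216 / ((n:ℝ)^2 * μ) := by
        rw [hxdef]; field_simp
      have hmul : Real.exp (-((n:ℝ)*(μ/2))) * ((n:ℝ) * μ^2) ≤ (216 / x^3) * ((n:ℝ) * μ^2) :=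
        mul_le_mul_of_nonneg_right hexpinv (by positivity)
      linarith [hstep1, hmul, hfinal.ge, hfinal.le]
    · -- case iii : μ > 1
      have hDle : ((1+μ)^n)⁻¹ - Real.exp (-((n:ℝ)*μ)) ≤ ((1+μ)^n)⁻¹ := by
        linarith [Real.exp_pos (-((n:ℝ)*μ))]
      obtain ⟨m, rfl⟩ : ∃ m, n = m + 1 := ⟨n - 1, by omega⟩
      have hpow : μ * 2^m ≤ (1+μ)^(m+1) := by
        have h1 : (2:ℝ)^m ≤ (1+μ)^m := pow_le_pow_left₀ (by norm_num) (by linarith) m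
        have h2 : μ ≤ 1 + μ := by linarith
        calc μ * 2^m ≤ (1+μ) * (1+μ)^m := by
              apply mul_le_mul h2 h1 (by positivity) h1μ.le
          _ = (1+μ)^(m+1) := by ring
      have hnat : ((m:ℝ) + 1)^2 ≤ 9 * 2^m := by exact_mod_cast aux_nat m
      have hkey : ((m:ℝ)+1)^2 * μ ≤ 216 * (1+μ)^(m+1) := by
        have h1 : ((m:ℝ)+1)^2 * μ ≤ 9 * 2^m * μ := by
          apply mul_le_mul_of_nonneg_right hnat hμ.le
        have h2 : (9:ℝ) * 2^m * μ = 9 * (μ * 2^m) := by ring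
        nlinarith [pow_pos h1μ (m+1)]
      have hfin : ((1+μ)^(m+1))⁻¹ ≤ 216 / (((m:ℝ)+1)^2 * μ) := by
        rw [inv_eq_one_div, div_le_div_iff₀ (pow_pos h1μ (m+1)) (by positivity)]
        linarith
      push_cast
      push_cast at hDle hfin
      linarith
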